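/- Let n ≥ 2, let A be an upper triangular n×n complex matrix (A i j = 0 for j < i) with first diagonal entry A₀₀ = μ and last diagonal entry A_{n−1,n−1} = λ. Let p be a polynomial with complex coefficients and α ∈ ℂ with p(α) = 0 and λ − μ = p′(α). Then X = α·I_n + E, where E is the matrix whose only nonzero entry is a 1 in position (0, n−1), satisfies XA − AX = p(X). -/

import Mathlib

lemma aux_pow {R : Type*} [Ring R] [Algebra ℂ R] (α : ℂ) (E : R) (hE2 : E * E = 0)
    (k : ℕ) : (α • (1:R) + E) ^ k = α ^ k • (1:R) + ((k : ℂ) * α ^ (k-1)) • E := by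
  induction k with
  | zero => simp
  | succ k ih =>
    rw [pow_succ, ih]
    have key : α * ((k:ℂ) * α ^ (k-1)) + α ^ k = ((k:ℂ)+1) * α ^ k := by
      rcases Nat.eq_zero_or_pos k with hk | hk
      · subst hk; simp
      · have h1 : α ^ (k-1) * α = α ^ k := by
          conv_rhs => rw [← Nat.succ_pred_eq_of_pos hk]
          rw [pow_succ]; rfl
        rw [show α * ((k:ℂ) * α ^ (k-1)) = (k:ℂ) * (α ^ (k-1) * α) by ring, h1]; ring
    simp only [add_mul, mul_add, smul_mul_assoc, mul_smul_comm, hE2, smul_zero,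
      one_mul, mul_one, add_zero, smul_add, smul_smul]
    rw [← pow_succ', add_assoc, ← add_smul, key, Nat.add_sub_cancel]
    push_cast; ring_nf

lemma aux_aeval {R : Type*} [Ring R] [Algebra ℂ R] (α : ℂ) (E : R) (hE2 : E * E = 0)
    (p : Polynomial ℂ) :
    Polynomial.aeval (α • (1:R) + E) p
      = Polynomial.eval α p • (1:R) + Polynomial.eval α (Polynomial.derivative p) • E := by
  induction p using Polynomial.induction_on' with
  | add f g hf hg =>
    simp only [map_add, hf, hg, Polynomial.eval_add]
    module
  | monomial k a =>
    rw [Polynomial.aeval_monomial, aux_pow α E hE2, Algebra.algebraMap_eq_smul_one,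
      smul_mul_assoc, one_mul, smul_add, smul_smul, smul_smul,
      Polynomial.derivative_monomial]
    simp [Polynomial.eval_monomial, mul_assoc]

theorem stmt5 (n : ℕ) (hn : 2 ≤ n) (A : Matrix (Fin n) (Fin n) ℂ)
    (hA : ∀ i j : Fin n, j < i → A i j = 0)
    (μ lam : ℂ)
    (hμ : A ⟨0, by omega⟩ ⟨0, by omega⟩ = μ)
    (hlam : A ⟨n - 1, by omega⟩ ⟨n - 1, by omega⟩ = lam)
    (p : Polynomial ℂ) (α : ℂ) (hpα : Polynomial.eval α p = 0)
    (hd : lam - μ = Polynomial.eval α (Polynomial.derivative p))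
    (E : Matrix (Fin n) (Fin n) ℂ)
    (hE : E = Matrix.single ⟨0, by omega⟩ ⟨n - 1, by omega⟩ 1)
    (X : Matrix (Fin n) (Fin n) ℂ)
    (hX : X = α • (1 : Matrix (Fin n) (Fin n) ℂ) + E) :
    X * A - A * X = Polynomial.aeval X p := by
  have h0 : 0 < n := by omega
  set i₀ : Fin n := ⟨0, h0⟩
  set i₁ : Fin n := ⟨n - 1, by omega⟩
  have hne : i₁ ≠ i₀ := by
    simp only [i₀, i₁, Ne, Fin.mk.injEq]; omega
  have hE2 : E * E = 0 := by
    rw [hE]; exact Matrix.single_mul_single_of_ne (1 : ℂ) i₀ i₁ i₀ hne 1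
  have hRHS : Polynomial.aeval X p = (lam - μ) • E := by
    rw [hX, aux_aeval α E hE2, hpα, ← hd]; simp
  rw [hRHS, hX]
  have hcomm : E * A - A * E = (lam - μ) • E := by
    have hjlt : ∀ j : Fin n, j ≠ i₁ → j < i₁ := by
      intro j hj
      have := j.isLt
      simp only [i₁, Fin.lt_def]
      have : (j : ℕ) ≠ n - 1 := fun h => hj (Fin.ext h)
      omega
    have hilt : ∀ i : Fin n, i ≠ i₀ → i₀ < i := by
      intro i hi
      simp only [i₀, Fin.lt_def]
      have : (i : ℕ) ≠ 0 := fun h => hi (Fin.ext h)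
      omega
    ext i j
    rw [hE]
    rcases eq_or_ne i i₀ with hi | hi
    · rcases eq_or_ne j i₁ with hj | hj
      · subst hi hj
        simp [hlam, hμ]
      · subst hi
        have hAj : A i₁ j = 0 := hA _ _ (hjlt j hj)
        simp [hj, Ne.symm hj, hAj]
    · rcases eq_or_ne j i₁ with hj | hj
      · subst hj
        have hAi : A i i₀ = 0 := hA _ _ (hilt i hi)
        simp [hi, hAi, Ne.symm hi]
      · simp [hi, hj, Ne.symm hi, Ne.symm hj]
  calc (α • 1 + E) * A - A * (α • 1 + E)
      = E * A - A * E := by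
        simp only [add_mul, mul_add, Matrix.smul_mul, Matrix.mul_smul, one_mul, mul_one]
        abel
    _ = (lam - μ) • E := hcomm
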